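/- Let n ≥ 1, p ∈ [1, ∞), 0 < s < 1, ρ > 0 and x₀ ∈ ℝ^n. Let φ: ℝ^n → [0,∞) be bounded with support in B(0,1) and ∫ φ = 1, and set φ_ρ(x) = ρ^{-n} φ(x/ρ). Then there is a constant C = C(n, p, ‖φ‖_∞) such that for any measurable f: ℝ^n → ℝ with finite Besov seminorm ‖f‖_{Ḃ^{s,p}_p} := (∫∫ |f(x)-f(y)|^p / |x-y|^{n+sp} dx dy)^{1/p}, one has (∫_{B(x₀,ρ)} |f(x) - (f * φ_ρ)(x₀)|^p dx)^{1/p} ≤ C ρ^s ‖f‖_{Ḃ^{s,p}_p}. -/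

import Mathlib

open MeasureTheory

private lemma rpow_add_le_aux {x y p : ℝ} (hx : 0 ≤ x) (hy : 0 ≤ y) (hp : 0 ≤ p) :
    (x + y) ^ p ≤ 2 ^ p * (x ^ p + y ^ p) := by
  have h1 : x + y ≤ 2 * max x y := by
    rcases le_total x y with h | h
    · rw [max_eq_right h]; linarith
    · rw [max_eq_left h]; linarith
  have h2 : (max x y) ^ p ≤ x ^ p + y ^ p := by
    rcases le_total x y with h | h
    · rw [max_eq_right h]; exact le_add_of_nonneg_left (Real.rpow_nonneg hx p)
    · rw [max_eq_left h]; exact le_add_of_nonneg_right (Real.rpow_nonneg hy p)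
  calc (x + y) ^ p ≤ (2 * max x y) ^ p :=
        Real.rpow_le_rpow (by positivity) h1 hp
    _ = 2 ^ p * (max x y) ^ p := Real.mul_rpow (by norm_num) (le_max_of_le_left hx)
    _ ≤ 2 ^ p * (x ^ p + y ^ p) := by
        have h3 : (0:ℝ) ≤ 2 ^ p := Real.rpow_nonneg (by norm_num) p
        nlinarith

private lemma jensen_aux {α : Type*} [MeasurableSpace α] (μ : Measure α)
    {h G : α → ENNReal} (hh : AEMeasurable h μ) (hG : AEMeasurable G μ)
    {p : ℝ} (hp : 1 ≤ p) (hG1 : ∫⁻ a, G a ∂μ ≤ 1) :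
    (∫⁻ a, h a * G a ∂μ) ^ p ≤ ∫⁻ a, h a ^ p * G a ∂μ := by
  rcases eq_or_lt_of_le hp with rfl | hp1
  · simp
  · have hp0 : (0:ℝ) < p := lt_trans one_pos hp1
    set q := Real.conjExponent p with hq
    have hpq : p.HolderConjugate q := Real.HolderConjugate.conjExponent hp1
    have hq0 : (0:ℝ) < q := hpq.symm.pos
    have key := ENNReal.lintegral_mul_le_Lp_mul_Lq μ hpq
      (f := fun a => h a * G a ^ (1/p)) (g := fun a => G a ^ (1/q))
      (hh.mul (hG.pow_const _)) (hG.pow_const _)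
    have e1 : ∀ a, ((fun a => h a * G a ^ (1/p)) * fun a => G a ^ (1/q)) a = h a * G a := by
      intro a
      simp only [Pi.mul_apply]
      rw [mul_assoc]
      congr 1
      rcases eq_or_ne (G a) 0 with h0 | h0
      · rw [h0, ENNReal.zero_rpow_of_pos (by positivity), ENNReal.zero_rpow_of_pos (by positivity),
          mul_zero]
      rcases eq_or_ne (G a) ⊤ with ht | ht
      · rw [ht, ENNReal.top_rpow_of_pos (by positivity), ENNReal.top_rpow_of_pos (by positivity),
          ENNReal.top_mul_top]
      · rw [← ENNReal.rpow_add _ _ h0 ht]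
        rw [show 1/p + 1/q = 1 by
          rw [one_div, one_div]; exact hpq.inv_add_inv_eq_one]
        exact ENNReal.rpow_one _
    have e2 : ∀ a, (h a * G a ^ (1/p)) ^ p = h a ^ p * G a := by
      intro a
      rw [ENNReal.mul_rpow_of_nonneg _ _ hp0.le, ← ENNReal.rpow_mul, one_div,
        inv_mul_cancel₀ hp0.ne', ENNReal.rpow_one]
    have e3 : ∀ a, (G a ^ (1/q)) ^ q = G a := by
      intro a
      rw [← ENNReal.rpow_mul, one_div, inv_mul_cancel₀ hq0.ne', ENNReal.rpow_one]
    have key2 : ∫⁻ a, h a * G a ∂μ ≤ (∫⁻ a, h a ^ p * G a ∂μ) ^ (1/p) := by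
      calc ∫⁻ a, h a * G a ∂μ
          = ∫⁻ a, ((fun a => h a * G a ^ (1/p)) * fun a => G a ^ (1/q)) a ∂μ :=
            (lintegral_congr e1).symm
        _ ≤ (∫⁻ a, (h a * G a ^ (1/p)) ^ p ∂μ) ^ (1/p) * (∫⁻ a, (G a ^ (1/q)) ^ q ∂μ) ^ (1/q) :=
            key
        _ = (∫⁻ a, h a ^ p * G a ∂μ) ^ (1/p) * (∫⁻ a, G a ∂μ) ^ (1/q) := by
            rw [lintegral_congr e2, lintegral_congr e3]
        _ ≤ (∫⁻ a, h a ^ p * G a ∂μ) ^ (1/p) * 1 := by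
            gcongr
            calc (∫⁻ a, G a ∂μ) ^ (1/q) ≤ (1:ENNReal) ^ (1/q) :=
                  ENNReal.rpow_le_rpow hG1 (by positivity)
              _ = 1 := ENNReal.one_rpow _
        _ = (∫⁻ a, h a ^ p * G a ∂μ) ^ (1/p) := mul_one _
    calc (∫⁻ a, h a * G a ∂μ) ^ p ≤ ((∫⁻ a, h a ^ p * G a ∂μ) ^ (1/p)) ^ p :=
          ENNReal.rpow_le_rpow key2 hp0.le
      _ = ∫⁻ a, h a ^ p * G a ∂μ := by
          rw [← ENNReal.rpow_mul, one_div, inv_mul_cancel₀ hp0.ne', ENNReal.rpow_one]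

theorem stmt_9 (n : ℕ) (hn : 1 ≤ n) (p s : ℝ) (hp1 : 1 ≤ p) (hs0 : 0 < s) (hs1 : s < 1)
    (φ : EuclideanSpace ℝ (Fin n) → ℝ) (hφ0 : ∀ x, 0 ≤ φ x)
    (hφb : ∃ M, ∀ x, φ x ≤ M)
    (hφsupp : Function.support φ ⊆ Metric.closedBall 0 1)
    (hφ1 : ∫ x, φ x = 1) :
    ∃ C > 0, ∀ (f : EuclideanSpace ℝ (Fin n) → ℝ), Measurable f →
      Integrable (fun z : EuclideanSpace ℝ (Fin n) × EuclideanSpace ℝ (Fin n) =>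
        |f z.1 - f z.2| ^ p / ‖z.1 - z.2‖ ^ ((n : ℝ) + s * p)) volume →
      ∀ (x₀ : EuclideanSpace ℝ (Fin n)) (ρ : ℝ), 0 < ρ →
        (∫ x in Metric.ball x₀ ρ,
            |f x - ∫ y, f (x₀ - y) * (ρ ^ (-(n : ℝ)) * φ (ρ⁻¹ • y))| ^ p) ^ (1 / p) ≤
          C * ρ ^ s *
            (∫ z : EuclideanSpace ℝ (Fin n) × EuclideanSpace ℝ (Fin n),
              |f z.1 - f z.2| ^ p / ‖z.1 - z.2‖ ^ ((n : ℝ) + s * p)) ^ (1 / p) := by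
  classical
  haveI : Nontrivial (EuclideanSpace ℝ (Fin n)) := by
    refine ⟨⟨EuclideanSpace.single ⟨0, hn⟩ 1, 0, fun hcon => ?_⟩⟩
    have h := congrArg (fun v => v ⟨0, hn⟩) hcon
    simp [EuclideanSpace.single_apply] at h
  obtain ⟨M₀, hM₀⟩ := hφb
  set M := max M₀ 1 with hMdef
  have hM1 : (1:ℝ) ≤ M := le_max_right _ _
  have hMpos : (0:ℝ) < M := lt_of_lt_of_le one_pos hM1
  have hφM : ∀ x, φ x ≤ M := fun x => (hM₀ x).trans (le_max_left _ _)
  have hp0 : (0:ℝ) < p := lt_of_lt_of_le one_pos hp1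
  have hnsp : (0:ℝ) ≤ (n:ℝ) + s * p := by positivity
  have hCbase : (0:ℝ) < M * 2 ^ ((n:ℝ) + s * p) :=
    mul_pos hMpos (Real.rpow_pos_of_pos two_pos _)
  refine ⟨(M * 2 ^ ((n:ℝ) + s * p)) ^ (1/p), Real.rpow_pos_of_pos hCbase _, ?_⟩
  intro f hf hInt x₀ ρ hρ
  have hφint : Integrable φ := by
    by_contra hcon
    rw [integral_undef hcon] at hφ1; norm_num at hφ1
  set g : EuclideanSpace ℝ (Fin n) → ℝ := fun y => ρ ^ (-(n:ℝ)) * φ (ρ⁻¹ • y) with hgdef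
  have hρn : (0:ℝ) < ρ ^ (-(n:ℝ)) := Real.rpow_pos_of_pos hρ _
  have hg0 : ∀ y, 0 ≤ g y := fun y => mul_nonneg hρn.le (hφ0 _)
  have hgb : ∀ y, g y ≤ ρ ^ (-(n:ℝ)) * M := fun y =>
    mul_le_mul_of_nonneg_left (hφM _) hρn.le
  have hgsupp : ∀ y : EuclideanSpace ℝ (Fin n),
      y ∉ Metric.closedBall (0 : EuclideanSpace ℝ (Fin n)) ρ → g y = 0 := by
    intro y hy
    have hφz : φ (ρ⁻¹ • y) = 0 := by
      by_contra hcon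
      apply hy
      have hmem := hφsupp (Function.mem_support.2 hcon)
      rw [Metric.mem_closedBall, dist_zero_right] at hmem ⊢
      rw [norm_smul, norm_inv, Real.norm_eq_abs, abs_of_pos hρ] at hmem
      calc ‖y‖ = ρ * (ρ⁻¹ * ‖y‖) := by field_simp
        _ ≤ ρ * 1 := mul_le_mul_of_nonneg_left hmem hρ.le
        _ = ρ := mul_one ρ
    simp only [hgdef, hφz, mul_zero]
  have hgint : Integrable g :=
    ((integrable_comp_smul_iff volume φ (inv_ne_zero hρ.ne')).2 hφint).const_mul _
  have hgone : ∫ y, g y = 1 := by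
    rw [hgdef]
    rw [integral_const_mul]
    rw [Measure.integral_comp_inv_smul_of_nonneg volume φ hρ.le, hφ1,
      finrank_euclideanSpace_fin, smul_eq_mul, mul_one, ← Real.rpow_natCast ρ n,
      ← Real.rpow_add hρ]
    norm_num
  have hGlint : ∫⁻ y, ENNReal.ofReal (g y) = 1 := by
    rw [← ofReal_integral_eq_lintegral_ofReal hgint (Filter.Eventually.of_forall hg0), hgone]
    simp
  -- the Besov lintegral
  have hΦmeas : Measurable (fun q : EuclideanSpace ℝ (Fin n) × EuclideanSpace ℝ (Fin n) =>
      ENNReal.ofReal (|f q.1 - f q.2| ^ p / ‖q.1 - q.2‖ ^ ((n:ℝ) + s * p))) := by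
    apply Measurable.ennreal_ofReal
    exact (((hf.comp measurable_fst).sub (hf.comp measurable_snd)).abs.pow_const p).div
      (((measurable_fst.sub measurable_snd).norm).pow_const _)
  set Il : ENNReal := ∫⁻ q : EuclideanSpace ℝ (Fin n) × EuclideanSpace ℝ (Fin n),
    ENNReal.ofReal (|f q.1 - f q.2| ^ p / ‖q.1 - q.2‖ ^ ((n:ℝ) + s * p)) with hIldef
  have hIlne : Il ≠ ⊤ := by
    refine ne_top_of_le_ne_top hInt.2.ne (lintegral_mono fun q => ?_)
    exact Real.ofReal_le_enorm _
  have hI_eq : (∫ z : EuclideanSpace ℝ (Fin n) × EuclideanSpace ℝ (Fin n),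
      |f z.1 - f z.2| ^ p / ‖z.1 - z.2‖ ^ ((n:ℝ) + s * p)) = Il.toReal := by
    rw [hIldef]
    exact integral_eq_lintegral_of_nonneg_ae
      (Filter.Eventually.of_forall fun q => by positivity) hInt.1
  -- pick a point with integrable slice
  have hvolne : (volume : Measure (EuclideanSpace ℝ (Fin n))) ≠ 0 := by
    intro hcon
    have := Metric.measure_ball_pos (volume : Measure (EuclideanSpace ℝ (Fin n)))
      (0 : EuclideanSpace ℝ (Fin n)) one_pos
    rw [hcon] at this; simp at this
  have : (ae (volume : Measure (EuclideanSpace ℝ (Fin n)))).NeBot := ae_neBot.mpr hvolne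
  obtain ⟨a, ha⟩ := (hInt.prod_right_ae).exists
  -- ha : Integrable (fun y => |f a - f y| ^ p / ‖a - y‖ ^ ((n:ℝ)+s*p))
  set R : ℝ := ‖a - x₀‖ + ρ with hRdef
  have hR0 : 0 < R := by positivity
  have hfp_cb : IntegrableOn (fun z => |f a - f z| ^ p) (Metric.closedBall x₀ ρ) := by
    refine Integrable.mono' ((ha.const_mul (R ^ ((n:ℝ) + s * p))).integrableOn)
      (((measurable_const.sub hf).abs.pow_const p).aestronglyMeasurable.restrict) ?_
    have hsing : ∀ᵐ z ∂(volume.restrict (Metric.closedBall x₀ ρ)), z ≠ a := by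
      refine ae_restrict_of_ae ?_
      rw [ae_iff]
      have : {z : EuclideanSpace ℝ (Fin n) | ¬ z ≠ a} = {a} := by
        ext z; simp
      rw [this]
      exact measure_singleton a
    filter_upwards [hsing, ae_restrict_mem Metric.isClosed_closedBall.measurableSet] with z hza hz
    rw [Real.norm_of_nonneg (by positivity)]
    have haz : a - z ≠ 0 := sub_ne_zero.2 (Ne.symm hza)
    have haz0 : (0:ℝ) < ‖a - z‖ := norm_pos_iff.2 haz
    have hazp : (0:ℝ) < ‖a - z‖ ^ ((n:ℝ) + s * p) := Real.rpow_pos_of_pos haz0 _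
    have hle : ‖a - z‖ ≤ R := by
      calc ‖a - z‖ ≤ ‖a - x₀‖ + ‖x₀ - z‖ := norm_sub_le_norm_sub_add_norm_sub a x₀ z
        _ ≤ ‖a - x₀‖ + ρ := by
            have : dist z x₀ ≤ ρ := Metric.mem_closedBall.1 hz
            rw [dist_eq_norm] at this
            have h2 : ‖x₀ - z‖ = ‖z - x₀‖ := norm_sub_rev _ _
            linarith
    calc |f a - f z| ^ p
        = (|f a - f z| ^ p / ‖a - z‖ ^ ((n:ℝ) + s * p)) * ‖a - z‖ ^ ((n:ℝ) + s * p) := by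
          field_simp
      _ ≤ (|f a - f z| ^ p / ‖a - z‖ ^ ((n:ℝ) + s * p)) * R ^ ((n:ℝ) + s * p) :=
          mul_le_mul_of_nonneg_left (Real.rpow_le_rpow haz0.le hle hnsp) (by positivity)
      _ = R ^ ((n:ℝ) + s * p) * (|f a - f z| ^ p / ‖a - z‖ ^ ((n:ℝ) + s * p)) := mul_comm _ _
  have hfzp_cb : IntegrableOn (fun z => |f z| ^ p) (Metric.closedBall x₀ ρ) := by
    have hconst : IntegrableOn (fun _ : EuclideanSpace ℝ (Fin n) => (2:ℝ) ^ p * |f a| ^ p)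
        (Metric.closedBall x₀ ρ) := integrableOn_const measure_closedBall_lt_top.ne
    refine Integrable.mono' (hconst.add (hfp_cb.const_mul (2 ^ p)))
      ((hf.abs.pow_const p).aestronglyMeasurable.restrict) ?_
    refine Filter.Eventually.of_forall fun z => ?_
    rw [Real.norm_of_nonneg (by positivity)]
    have h1 : |f z| ≤ |f a| + |f a - f z| := by
      calc |f z| = |f a - (f a - f z)| := by rw [sub_sub_cancel]
        _ ≤ |f a| + |f a - f z| := abs_sub _ _
    calc |f z| ^ p ≤ (|f a| + |f a - f z|) ^ p :=
          Real.rpow_le_rpow (abs_nonneg _) h1 hp0.le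
      _ ≤ 2 ^ p * (|f a| ^ p + |f a - f z| ^ p) :=
          rpow_add_le_aux (abs_nonneg _) (abs_nonneg _) hp0.le
      _ = 2 ^ p * |f a| ^ p + 2 ^ p * |f a - f z| ^ p := by ring
  have hf_cb : IntegrableOn f (Metric.closedBall x₀ ρ) := by
    have hconst1 : IntegrableOn (fun _ : EuclideanSpace ℝ (Fin n) => (1:ℝ))
        (Metric.closedBall x₀ ρ) := integrableOn_const measure_closedBall_lt_top.ne
    refine Integrable.mono' (hconst1.add hfzp_cb)
      (hf.aestronglyMeasurable.restrict) ?_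
    refine Filter.Eventually.of_forall fun z => ?_
    rw [Real.norm_eq_abs]
    rcases le_total (|f z|) 1 with hle | hle
    · exact hle.trans (le_add_of_nonneg_right (by positivity))
    · calc |f z| = |f z| ^ (1:ℝ) := (Real.rpow_one _).symm
        _ ≤ |f z| ^ p := Real.rpow_le_rpow_of_exponent_le hle hp1
        _ ≤ 1 + |f z| ^ p := le_add_of_nonneg_left zero_le_one
  have hT : MeasurePreserving (fun y : EuclideanSpace ℝ (Fin n) => x₀ - y) volume volume :=
    Measure.measurePreserving_sub_left volume x₀
  have hmemT : ∀ y : EuclideanSpace ℝ (Fin n),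
      x₀ - y ∈ Metric.closedBall x₀ ρ ↔ y ∈ Metric.closedBall (0:EuclideanSpace ℝ (Fin n)) ρ := by
    intro y
    simp only [Metric.mem_closedBall, dist_eq_norm, sub_sub_cancel_left, norm_neg, sub_zero]
  have hfT_cb : IntegrableOn (fun y => f (x₀ - y))
      (Metric.closedBall (0:EuclideanSpace ℝ (Fin n)) ρ) := by
    have h1 : Integrable ((Metric.closedBall x₀ ρ).indicator f) :=
      (integrable_indicator_iff Metric.isClosed_closedBall.measurableSet).2 hf_cb
    have h2 : Integrable (((Metric.closedBall x₀ ρ).indicator f) ∘ (fun y => x₀ - y)) :=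
      (hT.integrable_comp h1.aestronglyMeasurable).2 h1
    have h3 : (((Metric.closedBall x₀ ρ).indicator f) ∘ (fun y => x₀ - y)) =
        (Metric.closedBall (0:EuclideanSpace ℝ (Fin n)) ρ).indicator (fun y => f (x₀ - y)) := by
      funext y
      simp only [Function.comp_apply]
      by_cases hy : y ∈ Metric.closedBall (0:EuclideanSpace ℝ (Fin n)) ρ
      · rw [Set.indicator_of_mem hy, Set.indicator_of_mem ((hmemT y).2 hy)]
      · rw [Set.indicator_of_notMem hy,
          Set.indicator_of_notMem (fun hc => hy ((hmemT y).1 hc))]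
    rw [h3] at h2
    exact (integrable_indicator_iff Metric.isClosed_closedBall.measurableSet).1 h2
  have hfTmeas : Measurable (fun y : EuclideanSpace ℝ (Fin n) => f (x₀ - y)) :=
    hf.comp (measurable_const.sub measurable_id)
  have hfg : Integrable (fun y => f (x₀ - y) * g y) := by
    refine Integrable.mono'
      (((integrable_indicator_iff Metric.isClosed_closedBall.measurableSet).2
          hfT_cb.norm).const_mul (ρ ^ (-(n:ℝ)) * M))
      (hfTmeas.aestronglyMeasurable.mul hgint.1) ?_
    refine Filter.Eventually.of_forall fun y => ?_
    rw [Real.norm_eq_abs, abs_mul, abs_of_nonneg (hg0 y)]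
    by_cases hy : y ∈ Metric.closedBall (0:EuclideanSpace ℝ (Fin n)) ρ
    · rw [Set.indicator_of_mem hy]
      calc |f (x₀ - y)| * g y ≤ |f (x₀ - y)| * (ρ ^ (-(n:ℝ)) * M) :=
            mul_le_mul_of_nonneg_left (hgb y) (abs_nonneg _)
        _ = ρ ^ (-(n:ℝ)) * M * ‖f (x₀ - y)‖ := by rw [Real.norm_eq_abs]; ring
    · rw [Set.indicator_of_notMem hy, hgsupp y hy, mul_zero, mul_zero]
  set c : ℝ := ∫ y, f (x₀ - y) * g y with hcdef
  -- pointwise estimate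
  have hpoint : ∀ x : EuclideanSpace ℝ (Fin n),
      ENNReal.ofReal (|f x - c| ^ p) ≤ ENNReal.ofReal (ρ ^ (-(n:ℝ)) * M) *
        ∫⁻ z in Metric.closedBall x₀ ρ, ENNReal.ofReal (|f x - f z| ^ p) := by
    intro x
    have hsub : Integrable (fun y => (f x - f (x₀ - y)) * g y) := by
      have h' := (hgint.const_mul (f x)).sub hfg
      refine h'.congr (Filter.Eventually.of_forall fun y => ?_)
      show f x * g y - f (x₀ - y) * g y = (f x - f (x₀ - y)) * g y
      ring
    have h1 : f x - c = ∫ y, (f x - f (x₀ - y)) * g y := by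
      rw [hcdef]
      have : ∀ y, (f x - f (x₀ - y)) * g y = f x * g y - f (x₀ - y) * g y := fun y => by ring
      rw [integral_congr_ae (Filter.Eventually.of_forall this),
        integral_sub (hgint.const_mul (f x)) hfg, integral_const_mul, hgone, mul_one]
    have habs : Integrable (fun y => |f x - f (x₀ - y)| * g y) := by
      refine hsub.abs.congr (Filter.Eventually.of_forall fun y => ?_)
      show |(f x - f (x₀ - y)) * g y| = |f x - f (x₀ - y)| * g y
      rw [abs_mul, abs_of_nonneg (hg0 y)]
    have h2 : |f x - c| ≤ ∫ y, |f x - f (x₀ - y)| * g y := by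
      rw [h1, ← Real.norm_eq_abs]
      refine (norm_integral_le_integral_norm _).trans (le_of_eq ?_)
      refine integral_congr_ae (Filter.Eventually.of_forall fun y => ?_)
      show ‖(f x - f (x₀ - y)) * g y‖ = |f x - f (x₀ - y)| * g y
      rw [Real.norm_eq_abs, abs_mul, abs_of_nonneg (hg0 y)]
    have h3 : ENNReal.ofReal (|f x - c|) ≤
        ∫⁻ y, ENNReal.ofReal (|f x - f (x₀ - y)|) * ENNReal.ofReal (g y) := by
      refine le_trans (ENNReal.ofReal_le_ofReal h2) ?_
      rw [ofReal_integral_eq_lintegral_ofReal habs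
        (Filter.Eventually.of_forall fun y => mul_nonneg (abs_nonneg _) (hg0 y))]
      exact lintegral_mono fun y => le_of_eq (ENNReal.ofReal_mul (abs_nonneg _))
    have hDmeas : AEMeasurable (fun y => ENNReal.ofReal (|f x - f (x₀ - y)|)) volume :=
      ((measurable_const.sub hfTmeas).abs.ennreal_ofReal).aemeasurable
    have hGmeas : AEMeasurable (fun y => ENNReal.ofReal (g y)) volume :=
      ENNReal.measurable_ofReal.comp_aemeasurable hgint.1.aemeasurable
    have h4 : ENNReal.ofReal (|f x - c|) ^ p ≤
        ∫⁻ y, ENNReal.ofReal (|f x - f (x₀ - y)|) ^ p * ENNReal.ofReal (g y) :=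
      le_trans (ENNReal.rpow_le_rpow h3 hp0.le)
        (jensen_aux volume hDmeas hGmeas hp1 (le_of_eq hGlint))
    have h4' : ENNReal.ofReal (|f x - c| ^ p) ≤
        ∫⁻ y, ENNReal.ofReal (|f x - f (x₀ - y)| ^ p) * ENNReal.ofReal (g y) := by
      rw [← ENNReal.ofReal_rpow_of_nonneg (abs_nonneg _) hp0.le]
      refine h4.trans (le_of_eq (lintegral_congr fun y => ?_))
      rw [ENNReal.ofReal_rpow_of_nonneg (abs_nonneg _) hp0.le]
    have h5 : (∫⁻ y, ENNReal.ofReal (|f x - f (x₀ - y)| ^ p) * ENNReal.ofReal (g y)) ≤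
        ENNReal.ofReal (ρ ^ (-(n:ℝ)) * M) *
          ∫⁻ y in Metric.closedBall (0:EuclideanSpace ℝ (Fin n)) ρ,
            ENNReal.ofReal (|f x - f (x₀ - y)| ^ p) := by
      rw [← lintegral_const_mul' _ _ ENNReal.ofReal_ne_top,
        ← lintegral_indicator Metric.isClosed_closedBall.measurableSet _]
      refine lintegral_mono fun y => ?_
      by_cases hy : y ∈ Metric.closedBall (0:EuclideanSpace ℝ (Fin n)) ρ
      · rw [Set.indicator_of_mem hy, mul_comm]
        exact mul_le_mul_left (ENNReal.ofReal_le_ofReal (hgb y)) _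
      · rw [Set.indicator_of_notMem hy, hgsupp y hy]
        simp
    have h6 : (∫⁻ y in Metric.closedBall (0:EuclideanSpace ℝ (Fin n)) ρ,
          ENNReal.ofReal (|f x - f (x₀ - y)| ^ p)) =
        ∫⁻ z in Metric.closedBall x₀ ρ, ENNReal.ofReal (|f x - f z| ^ p) := by
      have hind : Measurable ((Metric.closedBall x₀ ρ).indicator
          (fun z => ENNReal.ofReal (|f x - f z| ^ p))) :=
        (((measurable_const.sub hf).abs.pow_const p).ennreal_ofReal).indicator
          Metric.isClosed_closedBall.measurableSet
      rw [← lintegral_indicator Metric.isClosed_closedBall.measurableSet _,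
        ← lintegral_indicator Metric.isClosed_closedBall.measurableSet _,
        ← hT.lintegral_comp hind]
      refine lintegral_congr fun y => ?_
      by_cases hy : y ∈ Metric.closedBall (0:EuclideanSpace ℝ (Fin n)) ρ
      · rw [Set.indicator_of_mem hy, Set.indicator_of_mem ((hmemT y).2 hy)]
      · rw [Set.indicator_of_notMem hy,
          Set.indicator_of_notMem (fun hc => hy ((hmemT y).1 hc))]
    calc ENNReal.ofReal (|f x - c| ^ p)
        ≤ ∫⁻ y, ENNReal.ofReal (|f x - f (x₀ - y)| ^ p) * ENNReal.ofReal (g y) := h4'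
      _ ≤ ENNReal.ofReal (ρ ^ (-(n:ℝ)) * M) *
          ∫⁻ y in Metric.closedBall (0:EuclideanSpace ℝ (Fin n)) ρ,
            ENNReal.ofReal (|f x - f (x₀ - y)| ^ p) := h5
      _ = ENNReal.ofReal (ρ ^ (-(n:ℝ)) * M) *
          ∫⁻ z in Metric.closedBall x₀ ρ, ENNReal.ofReal (|f x - f z| ^ p) := by rw [h6]
  -- integrate the pointwise estimate
  have h7 : ∀ x ∈ Metric.ball x₀ ρ,
      (∫⁻ z in Metric.closedBall x₀ ρ, ENNReal.ofReal (|f x - f z| ^ p)) ≤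
        ENNReal.ofReal ((2 * ρ) ^ ((n:ℝ) + s * p)) *
          ∫⁻ z in Metric.closedBall x₀ ρ,
            ENNReal.ofReal (|f x - f z| ^ p / ‖x - z‖ ^ ((n:ℝ) + s * p)) := by
    intro x hx
    rw [← lintegral_const_mul' _ _ ENNReal.ofReal_ne_top]
    refine setLIntegral_mono' Metric.isClosed_closedBall.measurableSet fun z hz => ?_
    have hb : |f x - f z| ^ p ≤
        (2 * ρ) ^ ((n:ℝ) + s * p) * (|f x - f z| ^ p / ‖x - z‖ ^ ((n:ℝ) + s * p)) := by
      rcases eq_or_ne x z with rfl | hxz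
      · rw [sub_self, abs_zero, Real.zero_rpow hp0.ne']
        positivity
      · have hxz0 : (0:ℝ) < ‖x - z‖ := norm_pos_iff.2 (sub_ne_zero.2 hxz)
        have hxzp : (0:ℝ) < ‖x - z‖ ^ ((n:ℝ) + s * p) := Real.rpow_pos_of_pos hxz0 _
        have hle2 : ‖x - z‖ ≤ 2 * ρ := by
          have h1 : ‖x - x₀‖ < ρ := by
            have := Metric.mem_ball.1 hx; rwa [dist_eq_norm] at this
          have h2 : ‖x₀ - z‖ ≤ ρ := by
            have h3 := Metric.mem_closedBall.1 hz
            rw [dist_eq_norm] at h3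
            calc ‖x₀ - z‖ = ‖z - x₀‖ := norm_sub_rev _ _
              _ ≤ ρ := h3
          calc ‖x - z‖ ≤ ‖x - x₀‖ + ‖x₀ - z‖ := norm_sub_le_norm_sub_add_norm_sub x x₀ z
            _ ≤ 2 * ρ := by linarith
        calc |f x - f z| ^ p
            = (|f x - f z| ^ p / ‖x - z‖ ^ ((n:ℝ) + s * p)) * ‖x - z‖ ^ ((n:ℝ) + s * p) := by
              field_simp
          _ ≤ (|f x - f z| ^ p / ‖x - z‖ ^ ((n:ℝ) + s * p)) * (2 * ρ) ^ ((n:ℝ) + s * p) :=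
              mul_le_mul_of_nonneg_left (Real.rpow_le_rpow hxz0.le hle2 hnsp) (by positivity)
          _ = (2 * ρ) ^ ((n:ℝ) + s * p) * (|f x - f z| ^ p / ‖x - z‖ ^ ((n:ℝ) + s * p)) :=
              mul_comm _ _
    calc ENNReal.ofReal (|f x - f z| ^ p)
        ≤ ENNReal.ofReal ((2 * ρ) ^ ((n:ℝ) + s * p) *
            (|f x - f z| ^ p / ‖x - z‖ ^ ((n:ℝ) + s * p))) := ENNReal.ofReal_le_ofReal hb
      _ = ENNReal.ofReal ((2 * ρ) ^ ((n:ℝ) + s * p)) *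
            ENNReal.ofReal (|f x - f z| ^ p / ‖x - z‖ ^ ((n:ℝ) + s * p)) :=
          ENNReal.ofReal_mul (by positivity)
  have hmain : (∫⁻ x in Metric.ball x₀ ρ, ENNReal.ofReal (|f x - c| ^ p)) ≤
      ENNReal.ofReal (ρ ^ (-(n:ℝ)) * M) *
        (ENNReal.ofReal ((2 * ρ) ^ ((n:ℝ) + s * p)) * Il) := by
    calc ∫⁻ x in Metric.ball x₀ ρ, ENNReal.ofReal (|f x - c| ^ p)
        ≤ ∫⁻ x in Metric.ball x₀ ρ, ENNReal.ofReal (ρ ^ (-(n:ℝ)) * M) *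
            (ENNReal.ofReal ((2 * ρ) ^ ((n:ℝ) + s * p)) *
              ∫⁻ z in Metric.closedBall x₀ ρ,
                ENNReal.ofReal (|f x - f z| ^ p / ‖x - z‖ ^ ((n:ℝ) + s * p))) := by
          refine setLIntegral_mono' Metric.isOpen_ball.measurableSet fun x hx => ?_
          exact (hpoint x).trans (mul_le_mul_right (h7 x hx) _)
      _ = ENNReal.ofReal (ρ ^ (-(n:ℝ)) * M) *
            (ENNReal.ofReal ((2 * ρ) ^ ((n:ℝ) + s * p)) *
              ∫⁻ x in Metric.ball x₀ ρ, ∫⁻ z in Metric.closedBall x₀ ρ,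
                ENNReal.ofReal (|f x - f z| ^ p / ‖x - z‖ ^ ((n:ℝ) + s * p))) := by
          rw [lintegral_const_mul' _ _ ENNReal.ofReal_ne_top,
            lintegral_const_mul' _ _ ENNReal.ofReal_ne_top]
      _ ≤ ENNReal.ofReal (ρ ^ (-(n:ℝ)) * M) *
            (ENNReal.ofReal ((2 * ρ) ^ ((n:ℝ) + s * p)) * Il) := by
          refine mul_le_mul_right (mul_le_mul_right ?_ _) _
          have ht : (∫⁻ x in Metric.ball x₀ ρ, ∫⁻ z in Metric.closedBall x₀ ρ,
              ENNReal.ofReal (|f x - f z| ^ p / ‖x - z‖ ^ ((n:ℝ) + s * p))) =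
              ∫⁻ q : EuclideanSpace ℝ (Fin n) × EuclideanSpace ℝ (Fin n) in
                (Metric.ball x₀ ρ) ×ˢ (Metric.closedBall x₀ ρ),
                ENNReal.ofReal (|f q.1 - f q.2| ^ p / ‖q.1 - q.2‖ ^ ((n:ℝ) + s * p)) := by
            rw [Measure.volume_eq_prod, ← Measure.prod_restrict]
            exact lintegral_lintegral hΦmeas.aemeasurable
          rw [ht, hIldef]
          exact setLIntegral_le_lintegral _ _
  have hLl_eq : (∫ x in Metric.ball x₀ ρ, |f x - c| ^ p) =
      (∫⁻ x in Metric.ball x₀ ρ, ENNReal.ofReal (|f x - c| ^ p)).toReal :=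
    integral_eq_lintegral_of_nonneg_ae (Filter.Eventually.of_forall fun x => by positivity)
      (((hf.sub measurable_const).abs.pow_const p).aestronglyMeasurable.restrict)
  have hrhs_ne : ENNReal.ofReal (ρ ^ (-(n:ℝ)) * M) *
      (ENNReal.ofReal ((2 * ρ) ^ ((n:ℝ) + s * p)) * Il) ≠ ⊤ :=
    ENNReal.mul_ne_top ENNReal.ofReal_ne_top (ENNReal.mul_ne_top ENNReal.ofReal_ne_top hIlne)
  have hL_le : (∫ x in Metric.ball x₀ ρ, |f x - c| ^ p) ≤
      (ρ ^ (-(n:ℝ)) * M) * ((2 * ρ) ^ ((n:ℝ) + s * p) * Il.toReal) := by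
    rw [hLl_eq]
    refine le_trans (ENNReal.toReal_mono hrhs_ne hmain) (le_of_eq ?_)
    rw [ENNReal.toReal_mul, ENNReal.toReal_mul,
      ENNReal.toReal_ofReal (mul_nonneg hρn.le hMpos.le),
      ENNReal.toReal_ofReal (Real.rpow_nonneg (by linarith) _)]
  have hIR0 : (0:ℝ) ≤ Il.toReal := ENNReal.toReal_nonneg
  have hfinal : (∫ x in Metric.ball x₀ ρ, |f x - c| ^ p) ^ (1/p) ≤
      (M * 2 ^ ((n:ℝ) + s * p)) ^ (1/p) * ρ ^ s * Il.toReal ^ (1/p) := by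
    have h10 := Real.rpow_le_rpow (integral_nonneg fun x => by positivity) hL_le
      (by positivity : (0:ℝ) ≤ 1/p)
    refine h10.trans (le_of_eq ?_)
    have e1 : ρ ^ (-(n:ℝ)) * ρ ^ ((n:ℝ) + s * p) = ρ ^ (s * p) := by
      rw [← Real.rpow_add hρ]; norm_num
    have e2 : (ρ ^ (-(n:ℝ)) * M) * ((2 * ρ) ^ ((n:ℝ) + s * p) * Il.toReal) =
        (M * 2 ^ ((n:ℝ) + s * p)) * (ρ ^ (s * p) * Il.toReal) := by
      rw [Real.mul_rpow (by norm_num) hρ.le]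
      calc (ρ ^ (-(n:ℝ)) * M) * ((2 ^ ((n:ℝ) + s * p) * ρ ^ ((n:ℝ) + s * p)) * Il.toReal)
          = (M * 2 ^ ((n:ℝ) + s * p)) * ((ρ ^ (-(n:ℝ)) * ρ ^ ((n:ℝ) + s * p)) * Il.toReal) := by
            ring
        _ = (M * 2 ^ ((n:ℝ) + s * p)) * (ρ ^ (s * p) * Il.toReal) := by rw [e1]
    rw [e2, Real.mul_rpow hCbase.le (mul_nonneg (Real.rpow_nonneg hρ.le _) hIR0),
      Real.mul_rpow (Real.rpow_nonneg hρ.le _) hIR0]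
    have e3 : (ρ ^ (s * p)) ^ (1/p) = ρ ^ s := by
      rw [← Real.rpow_mul hρ.le]
      congr 1
      field_simp
    rw [e3]; ring
  rw [hI_eq]
  have hgoal : (∫ x in Metric.ball x₀ ρ,
      |f x - ∫ y, f (x₀ - y) * (ρ ^ (-(n:ℝ)) * φ (ρ⁻¹ • y))| ^ p) =
      ∫ x in Metric.ball x₀ ρ, |f x - c| ^ p := by
    simp only [hcdef, hgdef]
  rw [hgoal]
  exact hfinal
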